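/- The regularised value of the positive geometric tail plus the negative geometric tail plus the middle finite sum vanishes: for every integer n, (constant term at y=0 of e^{(2·max(0,n)-n)y}/(1-e^{2y})) + (constant term at y=0 of e^{(-2·max(0,n)-n)y}/(1-e^{-2y})) + (value at y=0 of ∑_{k=-max(0,n)+1}^{max(0,n)-1} e^{(2k-n)y}) = 0. -/

import Mathlib

open Filter Topology

open Asymptotics

/-- Oriented finite sum `∑_{k=a}^{b} f k`, interpreted with the usual orientation
convention when `a > b` (so that `∑_{k=1}^{-1} f k = - f 0`), as used in the paper for
the "middle" compensating sum when `max(0,n) = 0`. -/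
noncomputable def orientedSum (a b : ℤ) (f : ℤ → ℂ) : ℂ :=
  (∑ k ∈ Finset.Icc a b, f k) - ∑ k ∈ Finset.Icc (b + 1) (a - 1), f k


theorem exp_taylor2_isBigO :
    (fun z : ℂ => Complex.exp z - (1 + z + z^2/2)) =O[𝓝 0] fun z => ‖z‖^3 := by
  have h := (NormedSpace.hasFPowerSeriesAt_exp_zero_of_radius_pos
    (𝕂 := ℂ) (𝔸 := ℂ) (by simp [NormedSpace.expSeries_radius_eq_top])).isBigO_sub_partialSum_pow 3
  simp only [zero_add] at h
  refine h.congr' ?_ EventuallyEq.rfl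
  filter_upwards with z
  rw [Complex.exp_eq_exp_ℂ]
  congr 1
  rw [FormalMultilinearSeries.partialSum, Finset.sum_range_succ, Finset.sum_range_succ,
    Finset.sum_range_one, NormedSpace.expSeries_apply_eq, NormedSpace.expSeries_apply_eq,
    NormedSpace.expSeries_apply_eq]
  norm_num [Nat.factorial]
  ring

theorem exp_quad_tendsto :
    Tendsto (fun z : ℂ => (Complex.exp z - 1 - z)/z^2) (𝓝[≠] 0) (𝓝 (1/2)) := by
  have h1 : (fun z : ℂ => (Complex.exp z - (1 + z + z^2/2))/z^2) =O[𝓝[≠] 0] fun z => ‖z‖ := by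
    have h := (exp_taylor2_isBigO.mono (nhdsWithin_le_nhds (s := {(0:ℂ)}ᶜ))).mul
      ((isBigO_refl (fun z : ℂ => (z^2)⁻¹) (𝓝[≠] (0:ℂ))).norm_right)
    refine h.congr' ?_ ?_
    · filter_upwards with z
      simp [div_eq_mul_inv]
    · filter_upwards [self_mem_nhdsWithin] with z (hz : z ≠ 0)
      have hz2 : ‖z‖ ≠ 0 := by simpa using hz
      rw [norm_inv, norm_pow]
      have : ‖z‖ ≠ 0 := by simpa using hz
      field_simp [this]
  have h2 : Tendsto (fun z : ℂ => (Complex.exp z - (1 + z + z^2/2))/z^2) (𝓝[≠] 0) (𝓝 0) :=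
    h1.trans_tendsto (by
      have : Tendsto (fun z : ℂ => ‖z‖) (𝓝 0) (𝓝 0) := by
        simpa using (continuous_norm.tendsto (0:ℂ))
      exact this.mono_left nhdsWithin_le_nhds)
  have h3 : Tendsto (fun z : ℂ => (Complex.exp z - (1 + z + z^2/2))/z^2 + 1/2)
      (𝓝[≠] 0) (𝓝 (1/2)) := by
    simpa using h2.add (tendsto_const_nhds (x := (1/2 : ℂ)))
  refine h3.congr' ?_
  filter_upwards [self_mem_nhdsWithin] with z (hz : z ≠ 0)
  field_simp
  ring

theorem exp_quad_tendsto' (c : ℂ) :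
    Tendsto (fun y : ℂ => (Complex.exp (c*y) - 1 - c*y)/y^2) (𝓝[≠] 0) (𝓝 (c^2/2)) := by
  rcases eq_or_ne c 0 with rfl | hc
  · simpa using tendsto_const_nhds (x := (0:ℂ)) |>.mono_left nhdsWithin_le_nhds
  · have hmap : Tendsto (fun y : ℂ => c * y) (𝓝[≠] 0) (𝓝[≠] 0) := by
      refine Tendsto.inf ?_ (tendsto_principal_principal.2 ?_)
      · have h0 := (continuous_mul_left c).tendsto (0:ℂ)
        rwa [mul_zero] at h0
      · intro y hy
        exact mul_ne_zero hc hy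
    have h := (exp_quad_tendsto.comp hmap).const_mul (c^2)
    rw [show c^2*(1/2 : ℂ) = c^2/2 by ring] at h
    refine h.congr' ?_
    filter_upwards [self_mem_nhdsWithin] with y (hy : y ≠ 0)
    simp only [Function.comp]
    field_simp

theorem exp_lin_tendsto (c : ℂ) :
    Tendsto (fun y : ℂ => (Complex.exp (c*y) - 1)/y) (𝓝[≠] 0) (𝓝 c) := by
  have h := (exp_quad_tendsto' c).mul (tendsto_nhdsWithin_of_tendsto_nhds
    (continuous_id.tendsto (0:ℂ)))
  have h2 : Tendsto (fun y : ℂ => (Complex.exp (c*y) - 1 - c*y)/y^2 * y + c)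
      (𝓝[≠] 0) (𝓝 c) := by
    simpa using h.add (tendsto_const_nhds (x := c))
  refine h2.congr' ?_
  filter_upwards [self_mem_nhdsWithin] with y (hy : y ≠ 0)
  field_simp
  ring

theorem exp_ne_one_near : ∀ᶠ y : ℂ in 𝓝[≠] 0, Complex.exp (2*y) ≠ 1 := by
  have hball : Metric.ball (0:ℂ) Real.pi ∈ 𝓝 (0:ℂ) :=
    Metric.ball_mem_nhds _ Real.pi_pos
  filter_upwards [nhdsWithin_le_nhds hball, self_mem_nhdsWithin] with y hy (hy0 : y ≠ 0)
  intro h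
  rw [Complex.exp_eq_one_iff] at h
  obtain ⟨k, hk⟩ := h
  have hk0 : k ≠ 0 := by
    rintro rfl
    simp at hk
    exact hy0 (by simpa using hk)
  have h1 : ‖2*y‖ = ‖(k : ℂ)‖ * (2*Real.pi) := by
    rw [hk, norm_mul]
    congr 1
    rw [show ((2:ℂ)*Real.pi*Complex.I) = ((2*Real.pi : ℝ) : ℂ)*Complex.I by push_cast; ring,
      norm_mul, Complex.norm_I, Complex.norm_real, mul_one]
    rw [Real.norm_eq_abs, abs_of_pos (by positivity)]
  have h2 : ‖2*y‖ < 2*Real.pi := by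
    rw [norm_mul, Complex.norm_two]
    have : ‖y‖ < Real.pi := by simpa [Complex.dist_eq] using hy
    linarith
  have h3 : (1:ℝ) ≤ ‖(k:ℂ)‖ := by
    rw [Complex.norm_intCast]
    exact_mod_cast Int.one_le_abs hk0
  nlinarith [Real.pi_pos]

theorem tail_limit (a : ℂ) :
    Tendsto (fun y : ℂ => Complex.exp (a*y)/(1 - Complex.exp (2*y)) + 1/(2*y))
      (𝓝[≠] 0) (𝓝 ((1-a)/2)) := by
  have hquad := exp_quad_tendsto' 2
  have hlinA := exp_lin_tendsto a
  have hlin2 := exp_lin_tendsto 2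
  have hN : Tendsto (fun y : ℂ =>
      2*((Complex.exp (a*y) - 1)/y) - (Complex.exp (2*y) - 1 - 2*y)/y^2)
      (𝓝[≠] 0) (𝓝 (2*a - 2)) := by
    have h := (hlinA.const_mul 2).sub hquad
    rw [show (2*a - 2^2/2 : ℂ) = 2*a - 2 by ring] at h
    exact h
  have hD : Tendsto (fun y : ℂ => -2*((Complex.exp (2*y) - 1)/y))
      (𝓝[≠] 0) (𝓝 (-4 : ℂ)) := by
    have h := hlin2.const_mul (-2 : ℂ)
    rw [show ((-2)*2 : ℂ) = -4 by ring] at h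
    exact h
  have h := hN.div hD (by norm_num)
  rw [show (2*a-2)/(-4 : ℂ) = (1-a)/2 by ring] at h
  refine h.congr' ?_
  filter_upwards [self_mem_nhdsWithin, exp_ne_one_near] with y (hy : y ≠ 0) hne
  have hsub : 1 - Complex.exp (2*y) ≠ 0 := sub_ne_zero.2 (Ne.symm hne)
  have hsub' : Complex.exp (2*y) - 1 ≠ 0 := sub_ne_zero.2 hne
  have hD0 : (-2:ℂ)*((Complex.exp (2*y) - 1)/y) ≠ 0 := by
    simp [div_eq_zero_iff, hy, hsub']
  rw [Pi.div_apply, div_eq_iff hD0]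
  field_simp
  ring

theorem neg_tail_limit (b : ℂ) :
    Tendsto (fun y : ℂ => Complex.exp (b*y)/(1 - Complex.exp (-2*y)) - 1/(2*y))
      (𝓝[≠] 0) (𝓝 ((1+b)/2)) := by
  have hmap : Tendsto (fun y : ℂ => -y) (𝓝[≠] 0) (𝓝[≠] 0) := by
    refine Tendsto.inf ?_ (tendsto_principal_principal.2 ?_)
    · simpa using continuous_neg.tendsto (0:ℂ)
    · intro y hy
      exact neg_ne_zero.2 hy
  have h := (tail_limit (-b)).comp hmap
  rw [show ((1 - -b)/2 : ℂ) = (1+b)/2 by ring] at h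
  refine h.congr fun y => ?_
  simp only [Function.comp]
  rw [show -b*(-y) = b*y by ring, show 2*(-y) = -2*y by ring]
  ring

theorem middle_value (n : ℤ) :
    orientedSum (-(max 0 n) + 1) (max 0 n - 1)
      (fun k => Complex.exp (((2 * k - n : ℤ) : ℂ) * 0)) = 2 * ((max 0 n : ℤ) : ℂ) - 1 := by
  have hone : ∀ k : ℤ, Complex.exp (((2 * k - n : ℤ) : ℂ) * 0) = 1 := fun k => by
    simp
  simp only [orientedSum, hone, Finset.sum_const, nsmul_eq_mul, mul_one]
  rcases le_or_gt n 0 with hn | hn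
  · rw [max_eq_left hn]
    rw [show (-(0:ℤ) + 1) = 1 by ring, show ((0:ℤ) - 1) = -1 by ring]
    rw [Finset.Icc_eq_empty (by omega : ¬ (1:ℤ) ≤ -1)]
    rw [show ((-1:ℤ) + 1) = 0 by ring, show ((1:ℤ) - 1) = 0 by ring]
    simp
  · rw [max_eq_right hn.le]
    rw [Finset.Icc_eq_empty (by omega : ¬ (n - 1 + 1 ≤ -n + 1 - 1))]
    rw [Int.card_Icc]
    have h1 : (n - 1 + 1 - (-n + 1)) = 2*n - 1 := by ring
    rw [h1]
    have h2 : ((2*n - 1).toNat : ℤ) = 2*n - 1 := Int.toNat_of_nonneg (by omega)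
    simp only [Finset.card_empty, Nat.cast_zero, mul_zero, sub_zero]
    have h3 : (((2*n-1).toNat : ℕ) : ℂ) = ((2*n-1 : ℤ) : ℂ) := by exact_mod_cast h2
    rw [h3]
    push_cast
    ring

/-- For every integer `n`, the constant Laurent coefficient at `y = 0` of the positive tail
`e^{(2·max(0,n)-n)y}/(1-e^{2y})`, plus the constant Laurent coefficient at `y = 0` of the
negative tail `e^{(-2·max(0,n)-n)y}/(1-e^{-2y})`, plus the value at `y = 0` of the middle
finite sum `∑_{k=-max(0,n)+1}^{max(0,n)-1} e^{(2k-n)y}`, vanishes. -/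
theorem regularised_tails_plus_middle_vanish (n : ℤ) :
    ∃ r₁ r₂ L₁ L₂ : ℂ,
      Tendsto (fun y : ℂ =>
          Complex.exp (((2 * max 0 n - n : ℤ) : ℂ) * y) / (1 - Complex.exp (2 * y)) - r₁ / y)
        (𝓝[≠] 0) (𝓝 L₁) ∧
      Tendsto (fun y : ℂ =>
          Complex.exp (((-2 * max 0 n - n : ℤ) : ℂ) * y) / (1 - Complex.exp (-2 * y)) - r₂ / y)
        (𝓝[≠] 0) (𝓝 L₂) ∧
      L₁ + L₂ +
        orientedSum (-(max 0 n) + 1) (max 0 n - 1)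
          (fun k => Complex.exp (((2 * k - n : ℤ) : ℂ) * 0)) = 0 := by
  refine ⟨-(1/2), 1/2, (1 - ((2 * max 0 n - n : ℤ) : ℂ))/2,
    (1 + ((-2 * max 0 n - n : ℤ) : ℂ))/2, ?_, ?_, ?_⟩
  · exact (tail_limit _).congr fun y => by ring
  · exact (neg_tail_limit _).congr fun y => by ring
  · rw [middle_value]
    push_cast
    ring
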